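/- Let q*(θ) ∝ exp(−H(θ) − λ‖θ‖²) be a smooth probability density on ℝ^p with λ > 0 and ‖H‖_∞ ≤ c. Then the entropy satisfies −E_{q*}[log q*] ≤ 2c + (p/2)(exp(2c) + log(π/λ)). -/

import Mathlib

open MeasureTheory Real


lemma sq_exp_integrable' {b : ℝ} (hb : 0 < b) :
    Integrable fun x : ℝ => x ^ 2 * Real.exp (-b * x ^ 2) := by
  have := integrable_rpow_mul_exp_neg_mul_sq hb (s := 2) (by norm_num)
  have h2 : ∀ x : ℝ, x ^ (2:ℝ) = x ^ 2 := fun x => by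
    rw [show (2:ℝ) = ((2:ℕ):ℝ) by norm_num, Real.rpow_natCast]
  simpa [h2] using this

lemma integral_sq_exp' {b : ℝ} (hb : 0 < b) :
    ∫ x : ℝ, x ^ 2 * Real.exp (-b * x ^ 2) = (2 * b)⁻¹ * Real.sqrt (π / b) := by
  have hderiv : ∀ x : ℝ, HasDerivAt (fun x : ℝ => x * Real.exp (-b * x ^ 2))
      (Real.exp (-b * x ^ 2) - 2 * b * (x ^ 2 * Real.exp (-b * x ^ 2))) x := by
    intro x
    have h1 : HasDerivAt (fun x : ℝ => -b * x ^ 2) (-b * (2 * x)) x := by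
      simpa using ((hasDerivAt_pow 2 x).const_mul (-b))
    have := (hasDerivAt_id x).mul h1.exp
    simp only [id_eq] at this
    exact this.congr_deriv (by ring)
  have hF'int : Integrable (fun x : ℝ =>
      Real.exp (-b * x ^ 2) - 2 * b * (x ^ 2 * Real.exp (-b * x ^ 2))) :=
    (integrable_exp_neg_mul_sq hb).sub ((sq_exp_integrable' hb).const_mul _)
  have h0 := integral_eq_zero_of_hasDerivAt_of_integrable hderiv hF'int
    (integrable_mul_exp_neg_mul_sq hb)
  rw [integral_sub (integrable_exp_neg_mul_sq hb) ((sq_exp_integrable' hb).const_mul _),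
    integral_const_mul, integral_gaussian] at h0
  rw [inv_mul_eq_div, eq_div_iff (by positivity : (2:ℝ) * b ≠ 0)]
  linarith

lemma integrable_exp_neg_mul_sq_norm' {p : ℕ} {b : ℝ} (hb : 0 < b) :
    Integrable fun v : EuclideanSpace ℝ (Fin p) => Real.exp (-b * ‖v‖ ^ 2) := by
  have h := (GaussianFourier.integrable_cexp_neg_mul_sq_norm_add
    (V := EuclideanSpace ℝ (Fin p)) (b := (b : ℂ)) (by simpa using hb) 0 0).norm
  have : ∀ v : EuclideanSpace ℝ (Fin p),
      ‖Complex.exp (-(b:ℂ) * (‖v‖:ℂ) ^ 2 + 0 * (inner ℝ (0 : EuclideanSpace ℝ (Fin p)) v : ℝ))‖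
        = Real.exp (-b * ‖v‖ ^ 2) := by
    intro v
    rw [Complex.norm_exp]
    have h2 : (-(b:ℂ) * (‖v‖:ℂ) ^ 2 + 0 * ((inner ℝ (0:EuclideanSpace ℝ (Fin p)) v : ℝ):ℂ))
        = ((-b * ‖v‖^2 : ℝ) : ℂ) := by push_cast; ring
    rw [h2, Complex.ofReal_re]
  rw [show (fun v : EuclideanSpace ℝ (Fin p) => Real.exp (-b * ‖v‖ ^ 2)) = _ from funext fun v => (this v).symm]
  exact h

lemma integrable_sq_norm_mul_exp' {p : ℕ} {b : ℝ} (hb : 0 < b) :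
    Integrable fun v : EuclideanSpace ℝ (Fin p) => ‖v‖ ^ 2 * Real.exp (-b * ‖v‖ ^ 2) := by
  have hcont : Continuous fun v : EuclideanSpace ℝ (Fin p) =>
      ‖v‖ ^ 2 * Real.exp (-b * ‖v‖ ^ 2) := by continuity
  refine Integrable.mono' ((integrable_exp_neg_mul_sq_norm' (half_pos hb)).const_mul (2/b))
    hcont.aestronglyMeasurable (Filter.Eventually.of_forall fun v => ?_)
  rw [Real.norm_eq_abs, abs_of_nonneg (by positivity)]
  set t := ‖v‖ ^ 2 with ht
  have ht0 : 0 ≤ t := by positivity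
  have h2 : (b/2) * t ≤ Real.exp ((b/2) * t) := (Real.add_one_le_exp _).trans' (by linarith)
  have hmul : Real.exp (-(b/2) * t) * Real.exp ((b/2) * t) = 1 := by
    rw [← Real.exp_add]; ring_nf; exact Real.exp_zero
  have h1 : t * Real.exp (-(b/2) * t) ≤ 2/b := by
    have h3 := mul_le_mul_of_nonneg_right h2 (Real.exp_pos (-(b/2) * t)).le
    have h4 : b/2 * t * Real.exp (-(b/2) * t) ≤ 1 :=
      h3.trans_eq (by rw [mul_comm]; exact hmul)
    have h5 : (2/b) * (b/2 * t * Real.exp (-(b/2) * t)) ≤ (2/b) * 1 :=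
      mul_le_mul_of_nonneg_left h4 (by positivity)
    calc t * Real.exp (-(b/2) * t)
        = (2/b) * (b/2 * t * Real.exp (-(b/2) * t)) := by field_simp
      _ ≤ (2/b) * 1 := h5
      _ = 2/b := mul_one _
  have hsplit : Real.exp (-b * t) = Real.exp (-(b/2) * t) * Real.exp (-(b/2) * t) := by
    rw [← Real.exp_add]; ring_nf
  calc t * Real.exp (-b * t) = (t * Real.exp (-(b/2) * t)) * Real.exp (-(b/2) * t) := by
        rw [hsplit]; ring
    _ ≤ (2/b) * Real.exp (-(b/2) * t) :=
        mul_le_mul_of_nonneg_right h1 (Real.exp_pos _).le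
    _ = 2/b * Real.exp (-(b/2) * t) := by ring

lemma integral_sq_norm_mul_exp' {p : ℕ} {b : ℝ} (hb : 0 < b) :
    ∫ v : EuclideanSpace ℝ (Fin p), ‖v‖ ^ 2 * Real.exp (-b * ‖v‖ ^ 2)
      = (p : ℝ) * ((2 * b)⁻¹ * Real.sqrt (π / b) ^ p) := by
  set M := (2 * b)⁻¹ * Real.sqrt (π / b) with hM
  set G := Real.sqrt (π / b) with hG
  have hmp := EuclideanSpace.volume_preserving_symm_measurableEquiv_toLp (Fin p)
  rw [← (hmp.symm ((MeasurableEquiv.toLp 2 (Fin p → ℝ)).symm)).integral_comp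
    (MeasurableEquiv.measurableEmbedding _)]
  have hnorm : ∀ x : Fin p → ℝ,
      ‖((MeasurableEquiv.toLp 2 (Fin p → ℝ)).symm).symm x‖ ^ 2 = ∑ i, x i ^ 2 := by
    intro x
    simp only [MeasurableEquiv.symm_symm, MeasurableEquiv.coe_toLp,
      EuclideanSpace.norm_eq, PiLp.toLp_apply, Real.norm_eq_abs, sq_abs]
    rw [Real.sq_sqrt (by positivity)]
  simp_rw [hnorm]
  have hsummand : ∀ x : Fin p → ℝ,
      (∑ i, x i ^ 2) * Real.exp (-b * ∑ i, x i ^ 2)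
      = ∑ i, ∏ j, (if j = i then x j ^ 2 * Real.exp (-b * x j ^ 2)
          else Real.exp (-b * x j ^ 2)) := by
    intro x
    have hexp : Real.exp (-b * ∑ j, x j ^ 2) = ∏ j, Real.exp (-b * x j ^ 2) := by
      rw [show (-b * ∑ j, x j ^ 2) = ∑ j, (-b * x j ^ 2) from Finset.mul_sum _ _ _,
        Real.exp_sum]
    rw [Finset.sum_mul]
    refine Finset.sum_congr rfl fun i _ => ?_
    have hsplit : ∀ j : Fin p, (if j = i then x j ^ 2 * Real.exp (-b * x j ^ 2)
        else Real.exp (-b * x j ^ 2))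
        = (if j = i then x j ^ 2 else 1) * Real.exp (-b * x j ^ 2) := by
      intro j; by_cases h : j = i <;> simp [h]
    simp_rw [hsplit]
    rw [Finset.prod_mul_distrib, Finset.prod_ite_eq' Finset.univ i (fun j => x j ^ 2)]
    simp only [Finset.mem_univ, if_true]
    rw [hexp]
  simp_rw [hsummand]
  have hint : ∀ i : Fin p, Integrable (fun x : Fin p → ℝ =>
      ∏ j, (if j = i then x j ^ 2 * Real.exp (-b * x j ^ 2)
        else Real.exp (-b * x j ^ 2))) := by
    intro i
    exact Integrable.fintype_prod (f := fun j t => if j = i then t ^ 2 * Real.exp (-b * t ^ 2)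
      else Real.exp (-b * t ^ 2)) fun j => by
        by_cases h : j = i
        · simpa [h] using sq_exp_integrable' hb
        · simpa [h] using integrable_exp_neg_mul_sq hb
  rw [integral_finset_sum Finset.univ fun i _ => hint i]
  have hone : ∀ i : Fin p, (∫ x : Fin p → ℝ,
      ∏ j, (if j = i then x j ^ 2 * Real.exp (-b * x j ^ 2)
        else Real.exp (-b * x j ^ 2))) = (2 * b)⁻¹ * G ^ p := by
    intro i
    rw [MeasureTheory.integral_fintype_prod_volume_eq_prod (ι := Fin p)
      (f := fun j t => if j = i then t ^ 2 * Real.exp (-b * t ^ 2)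
        else Real.exp (-b * t ^ 2))]
    have heach : ∀ j : Fin p, (∫ t : ℝ, if j = i then t ^ 2 * Real.exp (-b * t ^ 2)
        else Real.exp (-b * t ^ 2)) = G * (if j = i then (2 * b)⁻¹ else 1) := by
      intro j
      by_cases h : j = i
      · simp only [h, if_true]
        rw [integral_sq_exp' hb]; ring
      · simp only [h, if_false]
        rw [integral_gaussian]; ring
    simp_rw [heach]
    rw [Finset.prod_mul_distrib, Finset.prod_const,
      Finset.prod_ite_eq' Finset.univ i (fun _ => (2 * b)⁻¹)]
    simp [Finset.card_univ, mul_comm]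
  simp_rw [hone]
  rw [Finset.sum_const, Finset.card_univ, Fintype.card_fin, nsmul_eq_mul]
/-- Maximum entropy bound for a Gibbs density `q* ∝ exp(-H - λ‖θ‖²)` with
`‖H‖_∞ ≤ c`: `-E_{q*}[log q*] ≤ 2c + (p/2)(exp(2c) + log(π/λ))`. -/
theorem gibbs_entropy_upper_bound
    (p : ℕ) (H : EuclideanSpace ℝ (Fin p) → ℝ) (lam c : ℝ)
    (hlam : 0 < lam) (hH_cont : Continuous H) (hH_bdd : ∀ θ, |H θ| ≤ c)
    (Z : ℝ) (hZ : Z = ∫ θ : EuclideanSpace ℝ (Fin p),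
        Real.exp (-(H θ) - lam * ‖θ‖ ^ 2))
    (qs : EuclideanSpace ℝ (Fin p) → ℝ)
    (hqs : ∀ θ, qs θ = Real.exp (-(H θ) - lam * ‖θ‖ ^ 2) / Z)
    (hent : Integrable (fun θ => qs θ * Real.log (qs θ))) :
    -(∫ θ, qs θ * Real.log (qs θ))
      ≤ 2 * c + ((p : ℝ) / 2) * (Real.exp (2 * c) + Real.log (π / lam)) := by
  have hπl : 0 < π / lam := div_pos Real.pi_pos hlam
  have hGpos : 0 < Real.sqrt (π / lam) := Real.sqrt_pos.mpr hπl
  have hI₀pos : 0 < Real.sqrt (π / lam) ^ p := pow_pos hGpos p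
  have hgauss_int : Integrable (fun θ : EuclideanSpace ℝ (Fin p) =>
      Real.exp (-lam * ‖θ‖ ^ 2)) := integrable_exp_neg_mul_sq_norm' hlam
  have hgauss_val : (∫ θ : EuclideanSpace ℝ (Fin p), Real.exp (-lam * ‖θ‖ ^ 2))
      = Real.sqrt (π / lam) ^ p := by
    rw [GaussianFourier.integral_rexp_neg_mul_sq_norm hlam, finrank_euclideanSpace_fin]
    rw [Real.sqrt_eq_rpow, ← Real.rpow_natCast ((π / lam) ^ ((1:ℝ)/2)) p,
      ← Real.rpow_mul hπl.le]
    congr 1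
    ring
  have hf_cont : Continuous (fun θ : EuclideanSpace ℝ (Fin p) =>
      Real.exp (-(H θ) - lam * ‖θ‖ ^ 2)) :=
    Real.continuous_exp.comp ((hH_cont.neg).sub (continuous_const.mul (continuous_norm.pow 2)))
  have hf_le : ∀ θ : EuclideanSpace ℝ (Fin p),
      Real.exp (-(H θ) - lam * ‖θ‖ ^ 2) ≤ Real.exp c * Real.exp (-lam * ‖θ‖ ^ 2) := by
    intro θ
    rw [← Real.exp_add]
    have := (abs_le.mp (hH_bdd θ)).1
    apply Real.exp_le_exp.mpr
    linarith
  have hf_ge : ∀ θ : EuclideanSpace ℝ (Fin p),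
      Real.exp (-c) * Real.exp (-lam * ‖θ‖ ^ 2) ≤ Real.exp (-(H θ) - lam * ‖θ‖ ^ 2) := by
    intro θ
    rw [← Real.exp_add]
    have := (abs_le.mp (hH_bdd θ)).2
    apply Real.exp_le_exp.mpr
    linarith
  have hf_int : Integrable (fun θ : EuclideanSpace ℝ (Fin p) =>
      Real.exp (-(H θ) - lam * ‖θ‖ ^ 2)) :=
    Integrable.mono' (hgauss_int.const_mul (Real.exp c)) hf_cont.aestronglyMeasurable
      (Filter.Eventually.of_forall fun θ => by
        rw [Real.norm_eq_abs, abs_of_nonneg (Real.exp_pos _).le]; exact hf_le θ)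
  have hZ_lb : Real.exp (-c) * Real.sqrt (π / lam) ^ p ≤ Z := by
    rw [hZ, ← hgauss_val, ← integral_const_mul]
    exact integral_mono (hgauss_int.const_mul _) hf_int hf_ge
  have hZ_ub : Z ≤ Real.exp c * Real.sqrt (π / lam) ^ p := by
    rw [hZ, ← hgauss_val, ← integral_const_mul]
    exact integral_mono hf_int (hgauss_int.const_mul _) hf_le
  have hZpos : 0 < Z := lt_of_lt_of_le (by positivity) hZ_lb
  have hqs_nonneg : ∀ θ, 0 ≤ qs θ := fun θ => by
    rw [hqs]; positivity
  have hqs_eq : qs = fun θ => Real.exp (-(H θ) - lam * ‖θ‖ ^ 2) / Z := funext hqs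
  have hqs_cont : Continuous qs := by rw [hqs_eq]; exact hf_cont.div_const Z
  have hqs_int : Integrable qs := by rw [hqs_eq]; exact hf_int.div_const Z
  have hqs_total : (∫ θ, qs θ) = 1 := by
    rw [hqs_eq, integral_div, ← hZ, div_self hZpos.ne']
  have hlogqs : ∀ θ, Real.log (qs θ) = (-(H θ) - lam * ‖θ‖ ^ 2) - Real.log Z := by
    intro θ
    rw [hqs, Real.log_div (Real.exp_pos _).ne' hZpos.ne', Real.log_exp]
  have hpt : ∀ θ, qs θ * Real.log (qs θ)
      = -(qs θ * (H θ + lam * ‖θ‖ ^ 2)) - Real.log Z * qs θ := by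
    intro θ; rw [hlogqs]; ring
  have hA_int : Integrable (fun θ => qs θ * (H θ + lam * ‖θ‖ ^ 2)) := by
    have h1 : (fun θ => qs θ * (H θ + lam * ‖θ‖ ^ 2))
        = fun θ => -(qs θ * Real.log (qs θ)) - Real.log Z * qs θ := by
      funext θ; rw [hpt]; ring
    rw [h1]; exact hent.neg.sub (hqs_int.const_mul _)
  have hqsH_int : Integrable (fun θ => qs θ * H θ) := by
    refine Integrable.mono' (hqs_int.const_mul c) ((hqs_cont.mul hH_cont).aestronglyMeasurable)
      (Filter.Eventually.of_forall fun θ => ?_)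
    rw [Real.norm_eq_abs, abs_mul, abs_of_nonneg (hqs_nonneg θ)]
    calc qs θ * |H θ| ≤ qs θ * c := mul_le_mul_of_nonneg_left (hH_bdd θ) (hqs_nonneg θ)
      _ = c * qs θ := mul_comm _ _
  have hqsN_int : Integrable (fun θ => qs θ * (lam * ‖θ‖ ^ 2)) := by
    have h1 : (fun θ => qs θ * (lam * ‖θ‖ ^ 2))
        = fun θ => qs θ * (H θ + lam * ‖θ‖ ^ 2) - qs θ * H θ := by
      funext θ; ring
    rw [h1]; exact hA_int.sub hqsH_int
  have hIdent : -(∫ θ, qs θ * Real.log (qs θ))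
      = (∫ θ, qs θ * (H θ + lam * ‖θ‖ ^ 2)) + Real.log Z := by
    have h1 : (∫ θ, qs θ * Real.log (qs θ))
        = ∫ θ, (-(qs θ * (H θ + lam * ‖θ‖ ^ 2)) - Real.log Z * qs θ) := by
      rw [show (fun θ => qs θ * Real.log (qs θ)) = _ from funext hpt]
    have hneg : Integrable (fun θ : EuclideanSpace ℝ (Fin p) =>
        -(qs θ * (H θ + lam * ‖θ‖ ^ 2))) := hA_int.neg
    rw [h1, integral_sub hneg (hqs_int.const_mul _), integral_neg, integral_const_mul,
      hqs_total]
    ring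
  have hbound1 : (∫ θ, qs θ * H θ) ≤ c := by
    have h2 := integral_mono hqsH_int (hqs_int.mul_const c) fun θ =>
      mul_le_mul_of_nonneg_left (le_trans (le_abs_self _) (hH_bdd θ)) (hqs_nonneg θ)
    rwa [integral_mul_const, hqs_total, one_mul] at h2
  have hmom_val := integral_sq_norm_mul_exp' (p := p) hlam
  have hmom_int := integrable_sq_norm_mul_exp' (p := p) hlam
  have hbound2 : (∫ θ, qs θ * (lam * ‖θ‖ ^ 2)) ≤ (p : ℝ) / 2 * Real.exp (2 * c) := by
    have hptb : ∀ θ : EuclideanSpace ℝ (Fin p), qs θ * (lam * ‖θ‖ ^ 2)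
        ≤ (Real.exp c * lam / Z) * (‖θ‖ ^ 2 * Real.exp (-lam * ‖θ‖ ^ 2)) := by
      intro θ
      rw [hqs]
      have h2 : Real.exp (-(H θ) - lam * ‖θ‖ ^ 2) * (lam * ‖θ‖ ^ 2)
          ≤ (Real.exp c * Real.exp (-lam * ‖θ‖ ^ 2)) * (lam * ‖θ‖ ^ 2) :=
        mul_le_mul_of_nonneg_right (hf_le θ) (by positivity)
      calc Real.exp (-(H θ) - lam * ‖θ‖ ^ 2) / Z * (lam * ‖θ‖ ^ 2)
          = (Real.exp (-(H θ) - lam * ‖θ‖ ^ 2) * (lam * ‖θ‖ ^ 2)) * Z⁻¹ := by ring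
        _ ≤ ((Real.exp c * Real.exp (-lam * ‖θ‖ ^ 2)) * (lam * ‖θ‖ ^ 2)) * Z⁻¹ :=
            mul_le_mul_of_nonneg_right h2 (inv_nonneg.mpr hZpos.le)
        _ = (Real.exp c * lam / Z) * (‖θ‖ ^ 2 * Real.exp (-lam * ‖θ‖ ^ 2)) := by ring
    have hIm : (∫ θ, qs θ * (lam * ‖θ‖ ^ 2))
        ≤ (Real.exp c * lam / Z) * ((p : ℝ) * ((2 * lam)⁻¹ * Real.sqrt (π / lam) ^ p)) := by
      have h3 := integral_mono hqsN_int (hmom_int.const_mul _) hptb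
      rwa [integral_const_mul, hmom_val] at h3
    refine hIm.trans ?_
    have hZG : Real.exp c * Real.sqrt (π / lam) ^ p / Z ≤ Real.exp (2 * c) := by
      rw [div_le_iff₀ hZpos]
      calc Real.exp c * Real.sqrt (π / lam) ^ p
          = Real.exp (2 * c) * (Real.exp (-c) * Real.sqrt (π / lam) ^ p) := by
            rw [← mul_assoc, ← Real.exp_add]; ring_nf
        _ ≤ Real.exp (2 * c) * Z := mul_le_mul_of_nonneg_left hZ_lb (Real.exp_pos _).le
    calc (Real.exp c * lam / Z) * ((p : ℝ) * ((2 * lam)⁻¹ * Real.sqrt (π / lam) ^ p))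
        = ((p : ℝ) / 2) * (Real.exp c * Real.sqrt (π / lam) ^ p / Z) := by
          field_simp
      _ ≤ ((p : ℝ) / 2) * Real.exp (2 * c) :=
          mul_le_mul_of_nonneg_left hZG (by positivity)
  have hlogZ : Real.log Z ≤ c + (p : ℝ) / 2 * Real.log (π / lam) := by
    have h1 : Real.log Z ≤ Real.log (Real.exp c * Real.sqrt (π / lam) ^ p) :=
      Real.log_le_log hZpos hZ_ub
    rw [Real.log_mul (Real.exp_pos _).ne' hI₀pos.ne', Real.log_exp, Real.log_pow,
      Real.log_sqrt hπl.le] at h1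
    have h2 : (p : ℝ) * (Real.log (π / lam) / 2) = (p : ℝ) / 2 * Real.log (π / lam) := by ring
    linarith [h1, h2.le]
  have hsplit : (∫ θ, qs θ * (H θ + lam * ‖θ‖ ^ 2))
      = (∫ θ, qs θ * H θ) + ∫ θ, qs θ * (lam * ‖θ‖ ^ 2) := by
    rw [← integral_add hqsH_int hqsN_int]
    congr 1
    funext θ
    ring
  rw [hIdent, hsplit, mul_add]
  linarith
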